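/- Let r, m be nonnegative integers with 2r + 2 ≤ m, let t ≥ 1, and let 0 ≤ ε ≤ 1. Suppose that with probability at least 1 − ε, a uniformly random t-element subset U of 𝔽₂^m has the property that the degree-r evaluation vectors {u^r : u ∈ U} are linearly independent over 𝔽₂. Then for every codeword c ∈ RM(m, m−2r−2), with probability at least 1 − ε over a uniformly random t-element subset U of 𝔽₂^m, the codeword c is uniquely recoverable from the corrupted word c + 1_U: that is, for every codeword c' ∈ RM(m, m−2r−2) and every set V ⊆ 𝔽₂^m whose degree-r evaluation vectors are linearly independent over 𝔽₂, if c + 1_U = c' + 1_V then c' = c and V = U. -/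

import Mathlib

open MvPolynomial

/-- The degree-`r` evaluation vector of a point `u ∈ 𝔽₂^m`. -/
def evalVec (m r : ℕ) (u : Fin m → ZMod 2) :
    {S : Finset (Fin m) // S.card ≤ r} → ZMod 2 :=
  fun S => ∏ i ∈ S.1, u i

noncomputable def polyOf (m r : ℕ) (a : {S : Finset (Fin m) // S.card ≤ r} → ZMod 2) :
    MvPolynomial (Fin m) (ZMod 2) :=
  ∑ S : {S : Finset (Fin m) // S.card ≤ r}, C (a S) * ∏ i ∈ S.1, X i

lemma eval_polyOf (m r : ℕ) (a : {S : Finset (Fin m) // S.card ≤ r} → ZMod 2)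
    (v : Fin m → ZMod 2) :
    eval v (polyOf m r a) = ∑ S : {S : Finset (Fin m) // S.card ≤ r}, a S * evalVec m r v S := by
  simp [polyOf, evalVec]

lemma td_polyOf (m r : ℕ) (a : {S : Finset (Fin m) // S.card ≤ r} → ZMod 2) :
    (polyOf m r a).totalDegree ≤ r := by
  refine le_trans (totalDegree_finset_sum _ _) ?_
  refine Finset.sup_le fun S _ => ?_
  refine le_trans (totalDegree_mul _ _) ?_
  rw [totalDegree_C, zero_add]
  refine le_trans (totalDegree_finset_prod _ _) ?_
  refine le_trans (Finset.sum_le_sum fun i _ => (totalDegree_X i).le) ?_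
  simp [S.2]

section Dual
variable {ι : Type*} [Fintype ι] [DecidableEq ι] {K : Type*} [Field K]

lemma exists_dual (s : Set (ι → K))
    (hs : LinearIndependent K ((↑) : s → (ι → K))) (φ : (ι → K) → K) :
    ∃ a : ι → K, ∀ x ∈ s, ∑ j, a j * x j = φ x := by
  classical
  replace hs : LinearIndepOn K id s := hs
  let b := Module.Basis.extend hs
  let ℓ : (ι → K) →ₗ[K] K := b.constr K (fun i => if (i : ι → K) ∈ s then φ i else 0)
  refine ⟨fun j => ℓ (fun j' => if j = j' then 1 else 0), fun x hx => ?_⟩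
  have hxt : x ∈ hs.extend (Set.subset_univ s) := hs.subset_extend _ hx
  have h1 : ℓ x = φ x := by
    have : x = b ⟨x, hxt⟩ := (Module.Basis.extend_apply_self hs ⟨x, hxt⟩).symm
    rw [this, Module.Basis.constr_basis]
    simp only [← this, if_pos hx]
  rw [← h1, ℓ.pi_apply_eq_sum_univ x]
  simp [mul_comm]

end Dual

open Classical in
lemma subset_of_orth {m r : ℕ} (U V : Set (Fin m → ZMod 2))
    (hU : LinearIndependent (ZMod 2) (fun x : U => evalVec m r x.1))
    (hV : LinearIndependent (ZMod 2) (fun x : V => evalVec m r x.1))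
    (H : ∀ f : MvPolynomial (Fin m) (ZMod 2), f.totalDegree ≤ 2*r+1 →
      ∑ u ∈ Finset.univ.filter (· ∈ U), eval u f
        = ∑ v ∈ Finset.univ.filter (· ∈ V), eval v f) :
    U ⊆ V := by
  intro u₀ hu₀
  by_contra hu₀V
  -- independence of images
  have himU : LinearIndependent (ZMod 2) ((↑) : (evalVec m r '' U) → ({S : Finset (Fin m) // S.card ≤ r} → ZMod 2)) := by
    exact LinearIndepOn.id_image (v := evalVec m r) hU
  have himV : LinearIndependent (ZMod 2) ((↑) : (evalVec m r '' V) → ({S : Finset (Fin m) // S.card ≤ r} → ZMod 2)) := by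
    exact LinearIndepOn.id_image (v := evalVec m r) hV
  -- the polynomial P : indicator of u₀ on U
  obtain ⟨a, ha⟩ := exists_dual (evalVec m r '' U) himU
    (fun x => if x = evalVec m r u₀ then 1 else 0)
  set P := polyOf m r a with hP
  have hPu₀ : eval u₀ P = 1 := by
    rw [hP, eval_polyOf, ha _ ⟨u₀, hu₀, rfl⟩, if_pos rfl]
  have hPU : ∀ u ∈ U, u ≠ u₀ → eval u P = 0 := by
    intro u hu hne
    rw [hP, eval_polyOf, ha _ ⟨u, hu, rfl⟩, if_neg]
    intro h
    exact hne (congrArg Subtype.val (hU.injective (a₁ := ⟨u, hu⟩) (a₂ := ⟨u₀, hu₀⟩) h))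
  by_cases hspan : evalVec m r u₀ ∈ Submodule.span (ZMod 2) (evalVec m r '' V)
  · -- case (b): u₀'s vector in the span of V's vectors
    rw [Submodule.mem_span_set] at hspan
    obtain ⟨cc, hccsub, hccsum⟩ := hspan
    have hsupp : cc.support.Nonempty := by
      rcases Finset.eq_empty_or_nonempty cc.support with h | h
      · exfalso
        have : cc.sum (fun mi r => r • mi) = 0 := by
          rw [Finsupp.sum, h]; simp
        rw [hccsum] at this
        have := congrFun this ⟨∅, Nat.zero_le r⟩
        simp [evalVec] at this
      · exact h
    obtain ⟨x₁, hx₁⟩ := hsupp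
    obtain ⟨v₁, hv₁V, hv₁⟩ := hccsub hx₁
    obtain ⟨b, hb⟩ := exists_dual (evalVec m r '' V) himV
      (fun x => if x = x₁ then 1 else 0)
    set Q := polyOf m r b with hQ
    have hQv₁ : eval v₁ Q = 1 := by
      rw [hQ, eval_polyOf, hb _ ⟨v₁, hv₁V, rfl⟩, if_pos hv₁]
    have hQV : ∀ v ∈ V, v ≠ v₁ → eval v Q = 0 := by
      intro v hv hne
      rw [hQ, eval_polyOf, hb _ ⟨v, hv, rfl⟩, if_neg]
      intro h
      rw [← hv₁] at h
      exact hne (congrArg Subtype.val (hV.injective (a₁ := ⟨v, hv⟩) (a₂ := ⟨v₁, hv₁V⟩) h))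
    -- eval u₀ Q = 1 via the span relation
    have hQu₀ : eval u₀ Q = 1 := by
      let L : ({S : Finset (Fin m) // S.card ≤ r} → ZMod 2) →ₗ[ZMod 2] ZMod 2 :=
        { toFun := fun x => ∑ j, b j * x j
          map_add' := by intro x y; simp [mul_add, Finset.sum_add_distrib]
          map_smul' := by
            intro c x
            simp only [smul_eq_mul, RingHom.id_apply, Pi.smul_apply]
            rw [Finset.mul_sum]
            exact Finset.sum_congr rfl fun j _ => by ring }
      have hL : eval u₀ Q = L (evalVec m r u₀) := by
        rw [hQ, eval_polyOf]; rfl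
      rw [hL, ← hccsum, map_finsuppSum, Finsupp.sum]
      have hterm : ∀ x ∈ cc.support, L (cc x • x) = if x = x₁ then cc x else 0 := by
        intro x hx
        rw [map_smul, smul_eq_mul]
        have : L x = if x = x₁ then 1 else 0 := hb _ (hccsub hx)
        rw [this]
        split <;> simp
      rw [Finset.sum_congr rfl hterm, Finset.sum_ite_eq' cc.support x₁ (fun x => cc x),
        if_pos hx₁]
      have hnz := Finsupp.mem_support_iff.1 hx₁
      revert hnz
      generalize cc x₁ = z
      revert z
      decide
    have hne : u₀ ≠ v₁ := fun h => hu₀V (h ▸ hv₁V)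
    obtain ⟨i, hi⟩ := Function.ne_iff.1 hne
    set ℓ : MvPolynomial (Fin m) (ZMod 2) := X i + C (u₀ i + 1) with hℓ
    have hℓu₀ : eval u₀ ℓ = 1 := by
      have : eval u₀ ℓ = u₀ i + (u₀ i + 1) := by simp [hℓ]
      rw [this]
      generalize u₀ i = z
      revert z; decide
    have hℓv₁ : eval v₁ ℓ = 0 := by
      have h1 : eval v₁ ℓ = v₁ i + (u₀ i + 1) := by simp [hℓ]
      rw [h1]
      have h2 : u₀ i ≠ v₁ i := hi
      revert h2
      generalize u₀ i = z; generalize v₁ i = w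
      revert z w; decide
    have hℓtd : ℓ.totalDegree ≤ 1 := by
      refine le_trans (totalDegree_add _ _) ?_
      rw [totalDegree_X, totalDegree_C]
      simp
    have htd : (P * Q * ℓ).totalDegree ≤ 2*r+1 := by
      refine le_trans (totalDegree_mul _ _) ?_
      have h3 := totalDegree_mul P Q
      have h4 := td_polyOf m r a
      have h5 := td_polyOf m r b
      rw [← hP] at h4; rw [← hQ] at h5
      omega
    have hsum := H (P * Q * ℓ) htd
    have hLU : ∑ u ∈ Finset.univ.filter (· ∈ U), eval u (P * Q * ℓ) = 1 := by
      rw [Finset.sum_eq_single u₀]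
      · rw [eval_mul, eval_mul, hPu₀, hQu₀, hℓu₀]; ring
      · intro u hu hne'
        rw [eval_mul, eval_mul, hPU u (Finset.mem_filter.1 hu).2 hne', zero_mul, zero_mul]
      · intro h; exact absurd (Finset.mem_filter.2 ⟨Finset.mem_univ _, hu₀⟩) h
    have hLV : ∑ v ∈ Finset.univ.filter (· ∈ V), eval v (P * Q * ℓ) = 0 := by
      refine Finset.sum_eq_zero fun v hv => ?_
      have hvV : v ∈ V := (Finset.mem_filter.1 hv).2
      by_cases hvv : v = v₁
      · subst hvv; rw [eval_mul, hℓv₁, mul_zero]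
      · rw [eval_mul, eval_mul, hQV v hvV hvv, mul_zero, zero_mul]
    rw [hLU, hLV] at hsum
    exact one_ne_zero hsum
  · -- case (a): u₀'s vector not in the span
    have hins : LinearIndependent (ZMod 2)
        ((↑) : (insert (evalVec m r u₀) (evalVec m r '' V) : Set ({S : Finset (Fin m) // S.card ≤ r} → ZMod 2)) → ({S : Finset (Fin m) // S.card ≤ r} → ZMod 2)) :=
      LinearIndepOn.id_insert himV hspan
    obtain ⟨b, hb⟩ := exists_dual _ hins (fun x => if x = evalVec m r u₀ then 1 else 0)
    set Q := polyOf m r b with hQ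
    have hQu₀ : eval u₀ Q = 1 := by
      rw [hQ, eval_polyOf, hb _ (Set.mem_insert _ _), if_pos rfl]
    have hQV : ∀ v ∈ V, eval v Q = 0 := by
      intro v hv
      rw [hQ, eval_polyOf, hb _ (Set.mem_insert_of_mem _ ⟨v, hv, rfl⟩), if_neg]
      intro h
      exact hspan (h ▸ Submodule.subset_span ⟨v, hv, rfl⟩)
    have htd : (P * Q).totalDegree ≤ 2*r+1 := by
      refine le_trans (totalDegree_mul _ _) ?_
      have h4 := td_polyOf m r a
      have h5 := td_polyOf m r b
      rw [← hP] at h4; rw [← hQ] at h5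
      omega
    have hsum := H (P * Q) htd
    have hLU : ∑ u ∈ Finset.univ.filter (· ∈ U), eval u (P * Q) = 1 := by
      rw [Finset.sum_eq_single u₀]
      · rw [eval_mul, hPu₀, hQu₀]; ring
      · intro u hu hne'
        rw [eval_mul, hPU u (Finset.mem_filter.1 hu).2 hne', zero_mul]
      · intro h; exact absurd (Finset.mem_filter.2 ⟨Finset.mem_univ _, hu₀⟩) h
    have hLV : ∑ v ∈ Finset.univ.filter (· ∈ V), eval v (P * Q) = 0 := by
      refine Finset.sum_eq_zero fun v hv => ?_
      rw [eval_mul, hQV v (Finset.mem_filter.1 hv).2, mul_zero]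
    rw [hLU, hLV] at hsum
    exact one_ne_zero hsum

lemma sum_eval_zero {m : ℕ} (f : MvPolynomial (Fin m) (ZMod 2))
    (hf : f.totalDegree < m) : ∑ v : Fin m → ZMod 2, eval v f = 0 := by
  classical
  have : ∀ v : Fin m → ZMod 2, eval v f = ∑ d ∈ f.support, f.coeff d * ∏ i, v i ^ d i :=
    fun v => eval_eq' ..
  simp_rw [this]
  rw [Finset.sum_comm]
  refine Finset.sum_eq_zero fun d hd => ?_
  -- find i0 with d i0 = 0
  obtain ⟨i0, hi0⟩ : ∃ i0, d i0 = 0 := by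
    by_contra h
    push_neg at h
    have hsupp : d.support = Finset.univ := Finset.eq_univ_of_forall fun i => Finsupp.mem_support_iff.2 (h i)
    have : m ≤ d.sum fun _ e => e := by
      rw [Finsupp.sum, hsupp]
      calc m = ∑ _i : Fin m, 1 := by simp
        _ ≤ ∑ i : Fin m, d i := Finset.sum_le_sum fun i _ => Nat.one_le_iff_ne_zero.2 (h i)
    exact absurd (le_trans this (le_totalDegree hd)) (by omega)
  rw [← Finset.mul_sum]
  have hz : ∑ v : Fin m → ZMod 2, ∏ i, v i ^ d i = 0 := by
    apply Finset.sum_ninvolution (g := fun v => Function.update v i0 (v i0 + 1))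
    · intro v
      have hval : ∀ w : Fin m → ZMod 2, ∏ i, (Function.update v i0 (v i0 + 1)) i ^ d i
          = ∏ i, v i ^ d i := by
        intro w
        refine Finset.prod_congr rfl fun i _ => ?_
        by_cases h : i = i0
        · subst h; rw [hi0]; simp
        · rw [Function.update_of_ne h]
      rw [hval v]
      exact CharTwo.add_self_eq_zero _
    · intro v _
      intro h
      have := congrFun h i0
      simp at this
    · intro; exact Finset.mem_univ _
    · intro v
      funext i
      by_cases h : i = i0
      · subst h
        simp only [Function.update_self]
        rw [add_assoc, (by decide : (1:ZMod 2)+1 = 0), add_zero]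
      · simp [Function.update_of_ne h]
  rw [hz, mul_zero]

/-- A polynomial is multilinear if every variable occurs with individual degree at most 1. -/
def IsMultilinear {m : ℕ} (f : MvPolynomial (Fin m) (ZMod 2)) : Prop :=
  ∀ d ∈ f.support, ∀ i, d i ≤ 1

/-- The Reed–Muller code `RM(m, r)`: evaluation vectors of multilinear polynomials of
total degree at most `r`. -/
def RM (m r : ℕ) : Set ((Fin m → ZMod 2) → ZMod 2) :=
  { w | ∃ f : MvPolynomial (Fin m) (ZMod 2),
      IsMultilinear f ∧ f.totalDegree ≤ r ∧ ∀ v, w v = eval v f }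

open Classical in
/-- The characteristic vector of a set `U ⊆ 𝔽₂^m`. -/
noncomputable def chi {m : ℕ} (U : Set (Fin m → ZMod 2)) : (Fin m → ZMod 2) → ZMod 2 :=
  fun v => if v ∈ U then 1 else 0


open Classical in
lemma eq_of_decoding {m r : ℕ} (hrm : 2*r+2 ≤ m)
    (c c' : (Fin m → ZMod 2) → ZMod 2)
    (hc : c ∈ RM m (m - (2*r+2))) (hc' : c' ∈ RM m (m - (2*r+2)))
    (U V : Set (Fin m → ZMod 2))
    (hU : LinearIndependent (ZMod 2) (fun x : U => evalVec m r x.1))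
    (hV : LinearIndependent (ZMod 2) (fun x : V => evalVec m r x.1))
    (heq : c + chi U = c' + chi V) : c' = c ∧ V = U := by
  obtain ⟨g, -, hgd, hgev⟩ := hc
  obtain ⟨g', -, hgd', hgev'⟩ := hc'
  have h0 : ∀ (g0 f : MvPolynomial (Fin m) (ZMod 2)), g0.totalDegree ≤ m - (2*r+2) →
      f.totalDegree ≤ 2*r+1 → ∑ v : Fin m → ZMod 2, eval v g0 * eval v f = 0 := by
    intro g0 f hg0 hf
    have h1 : ∀ v : Fin m → ZMod 2, eval v g0 * eval v f = eval v (g0 * f) := by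
      intro v; rw [map_mul]
    rw [Finset.sum_congr rfl fun v _ => h1 v]
    apply sum_eval_zero
    refine lt_of_le_of_lt (totalDegree_mul _ _) ?_
    omega
  have hchi : ∀ (W : Set (Fin m → ZMod 2)) (f : MvPolynomial (Fin m) (ZMod 2)),
      ∑ v : Fin m → ZMod 2, chi W v * eval v f
        = ∑ v ∈ Finset.univ.filter (· ∈ W), eval v f := by
    intro W f
    rw [Finset.sum_filter]
    refine Finset.sum_congr rfl fun v _ => ?_
    by_cases h : v ∈ W
    · simp [chi, h]
    · simp [chi, h]
  have H : ∀ f : MvPolynomial (Fin m) (ZMod 2), f.totalDegree ≤ 2*r+1 →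
      ∑ u ∈ Finset.univ.filter (· ∈ U), eval u f
        = ∑ v ∈ Finset.univ.filter (· ∈ V), eval v f := by
    intro f hf
    have hA : ∑ v : Fin m → ZMod 2, (c v + chi U v) * eval v f
        = ∑ v : Fin m → ZMod 2, (c' v + chi V v) * eval v f :=
      Finset.sum_congr rfl fun v _ => by
        have hv := congrFun heq v
        simp only [Pi.add_apply] at hv
        rw [hv]
    simp only [add_mul, Finset.sum_add_distrib] at hA
    have hc0 : ∑ v : Fin m → ZMod 2, c v * eval v f = 0 := by
      rw [Finset.sum_congr rfl fun v _ => by rw [hgev v]]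
      exact h0 g f hgd hf
    have hc'0 : ∑ v : Fin m → ZMod 2, c' v * eval v f = 0 := by
      rw [Finset.sum_congr rfl fun v _ => by rw [hgev' v]]
      exact h0 g' f hgd' hf
    rw [hc0, hc'0, zero_add, zero_add, hchi U f, hchi V f] at hA
    exact hA
  have hUV : U = V := Set.Subset.antisymm
    (subset_of_orth U V hU hV H)
    (subset_of_orth V U hV hU (fun f hf => (H f hf).symm))
  have hVU : V = U := hUV.symm
  refine ⟨?_, hVU⟩
  rw [hVU] at heq
  exact (add_right_cancel heq.symm)

open scoped Classical in
theorem stmt8 (m r t : ℕ) (hrm : 2 * r + 2 ≤ m) (ht : 1 ≤ t)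
    (ε : ℝ) (hε0 : 0 ≤ ε) (hε1 : ε ≤ 1)
    -- with probability at least 1 - ε, a uniformly random t-element subset U of 𝔽₂^m
    -- has linearly independent degree-r evaluation vectors
    (hprob : (1 - ε) *
        (((Finset.univ : Finset (Fin m → ZMod 2)).powersetCard t).card : ℝ) ≤
      ((((Finset.univ : Finset (Fin m → ZMod 2)).powersetCard t).filter
        (fun (U : Finset (Fin m → ZMod 2)) => LinearIndependent (ZMod 2) (fun x : U => evalVec m r x.1))).card : ℝ)) :
    ∀ c ∈ RM m (m - (2 * r + 2)),
      (1 - ε) *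
        (((Finset.univ : Finset (Fin m → ZMod 2)).powersetCard t).card : ℝ) ≤
      ((((Finset.univ : Finset (Fin m → ZMod 2)).powersetCard t).filter
        (fun (U : Finset (Fin m → ZMod 2)) => ∀ c' ∈ RM m (m - (2 * r + 2)), ∀ V : Set (Fin m → ZMod 2),
          LinearIndependent (ZMod 2) (fun x : V => evalVec m r x.1) →
          c + chi (↑U : Set (Fin m → ZMod 2)) = c' + chi V →
          c' = c ∧ V = (↑U : Set (Fin m → ZMod 2)))).card : ℝ) := by
  intro c hc
  refine le_trans hprob ?_
  have hsub : ((Finset.univ : Finset (Fin m → ZMod 2)).powersetCard t).filter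
        (fun (U : Finset (Fin m → ZMod 2)) => LinearIndependent (ZMod 2) (fun x : U => evalVec m r x.1)) ⊆
      ((Finset.univ : Finset (Fin m → ZMod 2)).powersetCard t).filter
        (fun (U : Finset (Fin m → ZMod 2)) => ∀ c' ∈ RM m (m - (2 * r + 2)), ∀ V : Set (Fin m → ZMod 2),
          LinearIndependent (ZMod 2) (fun x : V => evalVec m r x.1) →
          c + chi (↑U : Set (Fin m → ZMod 2)) = c' + chi V →
          c' = c ∧ V = (↑U : Set (Fin m → ZMod 2))) := by
    intro Us hUs
    rw [Finset.mem_filter] at hUs ⊢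
    refine ⟨hUs.1, ?_⟩
    intro c' hc' V hVli heq
    have hUli : LinearIndependent (ZMod 2)
        (fun x : (↑Us : Set (Fin m → ZMod 2)) => evalVec m r x.1) := hUs.2
    exact eq_of_decoding hrm c c' hc hc' (↑Us) V hUli hVli heq
  exact_mod_cast Nat.cast_le.2 (Finset.card_le_card hsub)
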